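/- A real-analytic function g on a connected open subset Ω of ℝ^N that vanishes on a subset of Ω of positive Lebesgue measure vanishes identically on Ω. -/

import Mathlib

open MeasureTheory Metric Filter

lemma density_meets {N : ℕ} (x₀ : Fin N → ℝ) (s : Set (Fin N → ℝ))
    (hd : Tendsto (fun r => volume (s ∩ closedBall x₀ r) / volume (closedBall x₀ r))
      (nhdsWithin 0 (Set.Ioi 0)) (nhds 1))
    {v : Fin N → ℝ} (_hv : v ≠ 0) {δ : ℝ} (hδ : 0 < δ) :
    ∀ᶠ t in nhdsWithin (0:ℝ) (Set.Ioi 0),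
      ∃ y ∈ s, y ∈ closedBall (x₀ + t • v) (δ * t) := by
  set d : ℝ := ‖v‖ + δ with hd_def
  have hd0 : 0 < d := by positivity
  set c : ENNReal := ENNReal.ofReal ((δ / d) ^ N) with hc_def
  have hc0 : 0 < c := by
    apply ENNReal.ofReal_pos.2; positivity
  have h1c : (1 : ENNReal) - c < 1 :=
    ENNReal.sub_lt_self ENNReal.one_ne_top one_ne_zero hc0.ne'
  have hev : ∀ᶠ r in nhdsWithin (0:ℝ) (Set.Ioi 0),
      1 - c < volume (s ∩ closedBall x₀ r) / volume (closedBall x₀ r) :=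
    hd (eventually_gt_nhds h1c)
  have hcomp : Tendsto (fun t : ℝ => d * t) (nhdsWithin 0 (Set.Ioi 0))
      (nhdsWithin 0 (Set.Ioi 0)) := by
    apply tendsto_nhdsWithin_of_tendsto_nhds_of_eventually_within
    · have : Tendsto (fun t : ℝ => d * t) (nhds 0) (nhds (d * 0)) :=
        (continuous_const.mul continuous_id).tendsto 0
      simpa using this.mono_left nhdsWithin_le_nhds
    · filter_upwards [self_mem_nhdsWithin] with t ht
      exact mul_pos hd0 ht
  filter_upwards [hcomp.eventually hev, self_mem_nhdsWithin] with t ht htpos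
  by_contra hcon
  push_neg at hcon
  have hempty : s ∩ closedBall (x₀ + t • v) (δ * t) = ∅ := by
    ext y; simp only [Set.mem_inter_iff, Set.mem_empty_iff_false, iff_false, not_and]
    exact fun hy => hcon y hy
  have htpos' : (0:ℝ) < t := htpos
  have hsub : closedBall (x₀ + t • v) (δ * t) ⊆ closedBall x₀ (d * t) := by
    intro y hy
    simp only [mem_closedBall] at hy ⊢
    calc dist y x₀ ≤ dist y (x₀ + t • v) + dist (x₀ + t • v) x₀ := dist_triangle _ _ _
      _ ≤ δ * t + ‖t • v‖ := by
          have h2 : dist (x₀ + t • v) x₀ = ‖t • v‖ := by simp [dist_eq_norm]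
          rw [h2]; exact add_le_add hy le_rfl
      _ = δ * t + t * ‖v‖ := by rw [norm_smul, Real.norm_of_nonneg htpos'.le]
      _ = d * t := by ring
  set A := volume (s ∩ closedBall x₀ (d * t))
  set B := volume (closedBall x₀ (d * t))
  set D := volume (closedBall (x₀ + t • v) (δ * t))
  have hBpos : B ≠ 0 := (measure_closedBall_pos volume x₀ (by positivity)).ne'
  have hBfin : B ≠ ⊤ := measure_closedBall_lt_top.ne
  have hDB : D = c * B := by
    have h1 : D = ENNReal.ofReal ((δ * t) ^ N) * volume (closedBall (0 : Fin N → ℝ) 1) := by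
      show volume (closedBall (x₀ + t • v) (δ * t)) = _
      rw [Measure.addHaar_closedBall' volume _ (by positivity), Module.finrank_fin_fun]
    have h2 : B = ENNReal.ofReal ((d * t) ^ N) * volume (closedBall (0 : Fin N → ℝ) 1) := by
      show volume (closedBall x₀ (d * t)) = _
      rw [Measure.addHaar_closedBall' volume _ (by positivity), Module.finrank_fin_fun]
    rw [h1, h2, hc_def, ← mul_assoc, ← ENNReal.ofReal_mul (by positivity)]
    congr 2
    rw [← mul_pow]
    congr 1
    field_simp
  have hADB : A + D ≤ B := by
    have hAsub : s ∩ closedBall x₀ (d * t) ⊆ closedBall x₀ (d * t) \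
        closedBall (x₀ + t • v) (δ * t) := by
      intro y ⟨hys, hyB⟩
      refine ⟨hyB, fun hyb => ?_⟩
      have : y ∈ s ∩ closedBall (x₀ + t • v) (δ * t) := ⟨hys, hyb⟩
      simp [hempty] at this
    have hAle : A ≤ B - D := by
      calc A ≤ volume (closedBall x₀ (d * t) \ closedBall (x₀ + t • v) (δ * t)) :=
            measure_mono hAsub
        _ = B - D := measure_diff hsub measurableSet_closedBall.nullMeasurableSet
            measure_closedBall_lt_top.ne
    calc A + D ≤ (B - D) + D := add_le_add hAle le_rfl
      _ = B := tsub_add_cancel_of_le (measure_mono hsub)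
  have hratio : A / B ≤ 1 - c := by
    apply ENNReal.le_sub_of_add_le_right ENNReal.ofReal_ne_top
    have : A / B + c = (A + c * B) / B := by
      rw [← ENNReal.div_add_div_same]
      congr 1
      rw [mul_div_assoc, ENNReal.div_self hBpos hBfin, mul_one]
    rw [this]
    calc (A + c * B) / B ≤ B / B := by rw [← hDB]; exact ENNReal.div_le_div_right hADB _
      _ = 1 := ENNReal.div_self hBpos hBfin
  exact absurd hratio (not_le.2 ht)

/-- A real-analytic function on a connected open subset of `ℝ^N` vanishing on a
set of positive measure vanishes identically. -/
theorem analytic_eqOn_zero_of_pos_measure_zeros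
    (N : ℕ) (Ω : Set (Fin N → ℝ)) (hΩo : IsOpen Ω) (hΩc : IsConnected Ω)
    (g : (Fin N → ℝ) → ℝ) (hg : AnalyticOnNhd ℝ g Ω)
    (s : Set (Fin N → ℝ)) (hs : s ⊆ Ω) (hzero : ∀ x ∈ s, g x = 0)
    (hpos : 0 < volume s) :
    Set.EqOn g 0 Ω := by
  classical
  rcases Nat.eq_zero_or_pos N with hN | hN
  · subst hN
    obtain ⟨x₁, hx₁⟩ := nonempty_of_measure_ne_zero hpos.ne'
    intro x hx
    haveI : Unique (Fin 0 → ℝ) := Pi.uniqueOfIsEmpty _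
    have hxx : x = x₁ := Subsingleton.elim x x₁
    simp [hxx, hzero x₁ hx₁]
  · have hae := Besicovitch.ae_tendsto_measure_inter_div volume s
    obtain ⟨x₀, hx₀s, hx₀d⟩ := Measure.exists_mem_of_measure_ne_zero_of_ae hpos.ne' hae
    have hx₀Ω : x₀ ∈ Ω := hs hx₀s
    obtain ⟨p, hp⟩ := hg x₀ hx₀Ω
    have key : ∀ n, ∀ v : Fin N → ℝ, (p n) (fun _ => v) = 0 := by
      intro n
      induction n using Nat.strong_induction_on with
      | _ n ih =>
        have hps : ∀ y : Fin N → ℝ, p.partialSum (n + 1) y = p n (fun _ => y) := by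
          intro y
          rw [FormalMultilinearSeries.partialSum]
          refine Finset.sum_eq_single_of_mem n (Finset.self_mem_range_succ n) fun b hb hbn => ?_
          exact ih b (lt_of_le_of_ne (Nat.lt_succ_iff.1 (Finset.mem_range.1 hb)) hbn) y
        have hO := hp.isBigO_sub_partialSum_pow (n + 1)
        obtain ⟨C, hC0, hCb⟩ := hO.exists_pos
        rw [Asymptotics.isBigOWith_iff, Metric.eventually_nhds_iff] at hCb
        obtain ⟨ε, hε0, hCb⟩ := hCb
        have hvne : ∀ w : Fin N → ℝ, w ≠ 0 → (p n) (fun _ => w) = 0 := by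
          intro w hw
          by_contra hqw
          set q : (Fin N → ℝ) → ℝ := fun y => p n (fun _ => y) with hq_def
          have hqc : Continuous q := (p n).cont.comp (continuous_pi fun _ => continuous_id)
          have hqw' : (0:ℝ) < ‖q w‖ := norm_pos_iff.2 hqw
          have hhalf : (0:ℝ) < ‖q w‖ / 2 := by positivity
          obtain ⟨δ, hδ0, hδprop⟩ := Metric.continuousAt_iff.1 (hqc.continuousAt (x := w)) (‖q w‖ / 2) hhalf
          have hden := density_meets x₀ s hx₀d hw (half_pos hδ0)
          set d' : ℝ := ‖w‖ + δ / 2 with hd'_def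
          have hd'0 : 0 < d' := by positivity
          have hlin : Tendsto (fun t : ℝ => d' * t) (nhdsWithin 0 (Set.Ioi 0)) (nhds 0) := by
            have : Tendsto (fun t : ℝ => d' * t) (nhds 0) (nhds (d' * 0)) :=
              (continuous_const.mul continuous_id).tendsto 0
            simpa using this.mono_left nhdsWithin_le_nhds
          have hev2 : ∀ᶠ t in nhdsWithin (0:ℝ) (Set.Ioi 0), d' * t < ε :=
            hlin (Iio_mem_nhds hε0)
          set K : ℝ := C * d' ^ (n + 1) with hK_def
          have hK0 : 0 < K := by positivity
          have hlin2 : Tendsto (fun t : ℝ => K * t) (nhdsWithin 0 (Set.Ioi 0)) (nhds 0) := by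
            have : Tendsto (fun t : ℝ => K * t) (nhds 0) (nhds (K * 0)) :=
              (continuous_const.mul continuous_id).tendsto 0
            simpa using this.mono_left nhdsWithin_le_nhds
          have hev3 : ∀ᶠ t in nhdsWithin (0:ℝ) (Set.Ioi 0), K * t < ‖q w‖ / 2 :=
            hlin2 (Iio_mem_nhds hhalf)
          obtain ⟨t, ⟨⟨⟨y, hys, hyb⟩, ht_eps⟩, ht_small⟩, htpos⟩ :=
            (((hden.and hev2).and hev3).and self_mem_nhdsWithin).exists
          have htpos' : (0:ℝ) < t := htpos
          set z : Fin N → ℝ := y - x₀ with hz_def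
          have hz1 : ‖z - t • w‖ ≤ δ / 2 * t := by
            have : dist y (x₀ + t • w) ≤ δ / 2 * t := hyb
            rw [dist_eq_norm] at this
            rw [show z - t • w = y - (x₀ + t • w) by rw [hz_def]; abel]; exact this
          have hznorm : ‖z‖ ≤ d' * t := by
            have hzsplit : z = (z - t • w) + t • w := by abel
            calc ‖z‖ = ‖(z - t • w) + t • w‖ := by rw [← hzsplit]
              _ ≤ ‖z - t • w‖ + ‖t • w‖ := norm_add_le _ _
              _ ≤ δ / 2 * t + t * ‖w‖ := by
                  rw [norm_smul, Real.norm_of_nonneg htpos'.le]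
                  exact add_le_add hz1 le_rfl
              _ = d' * t := by rw [hd'_def]; ring
          have hzlt : dist z 0 < ε := by
            rw [dist_zero_right]
            exact lt_of_le_of_lt hznorm ht_eps
          have hbound := hCb hzlt
          have hxz : x₀ + z = y := by rw [hz_def]; abel
          rw [hxz, hzero y hys, hps z] at hbound
          have htne : t ≠ 0 := ne_of_gt htpos'
          set u : Fin N → ℝ := t⁻¹ • z with hu_def
          have hzu : z = t • u := (smul_inv_smul₀ htne z).symm
          have huw : dist u w < δ := by
            have h1 : t⁻¹ • (z - t • w) = u - w := by
              rw [inv_smul_eq_iff₀ htne, smul_sub, ← hzu]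
            rw [dist_eq_norm, ← h1, norm_smul, Real.norm_of_nonneg (inv_nonneg.2 htpos'.le)]
            calc t⁻¹ * ‖z - t • w‖ ≤ t⁻¹ * (δ / 2 * t) := by
                  exact mul_le_mul_of_nonneg_left hz1 (inv_nonneg.2 htpos'.le)
              _ = δ / 2 := by field_simp
              _ < δ := by linarith
          have hqu := hδprop huw
          have hqul : ‖q w‖ / 2 ≤ ‖q u‖ := by
            have h1 : ‖q w‖ ≤ ‖q w - q u‖ + ‖q u‖ := by
              have heq : q w - q u + q u = q w := by ring
              calc ‖q w‖ = ‖(q w - q u) + q u‖ := by rw [heq]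
                _ ≤ ‖q w - q u‖ + ‖q u‖ := norm_add_le _ _
            rw [dist_eq_norm, norm_sub_rev] at hqu
            linarith
          have hqz : ‖q z‖ = t ^ n * ‖q u‖ := by
            have h1 : q z = t ^ n * q u := by
              rw [hq_def]
              show (p n) (fun _ => z) = t ^ n * (p n) (fun _ => u)
              have h2 : (fun _ : Fin n => z) = fun i : Fin n => t • u := by
                funext i; rw [hzu]
              rw [h2]
              have := (p n).map_smul_univ (fun _ : Fin n => t) (fun _ : Fin n => u)
              rw [this]
              simp [smul_eq_mul]
            rw [h1, norm_mul, norm_pow, Real.norm_of_nonneg htpos'.le]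
          have hlow : ‖q w‖ / 2 * t ^ n ≤ ‖q z‖ := by
            rw [hqz]
            calc ‖q w‖ / 2 * t ^ n = t ^ n * (‖q w‖ / 2) := by ring
              _ ≤ t ^ n * ‖q u‖ :=
                  mul_le_mul_of_nonneg_left hqul (pow_nonneg htpos'.le n)
          have hub : ‖q z‖ ≤ K * t ^ (n + 1) := by
            have h1 : ‖(0:ℝ) - q z‖ = ‖q z‖ := by simp
            rw [h1] at hbound
            calc ‖q z‖ ≤ C * ‖‖z‖ ^ (n + 1)‖ := hbound
              _ = C * ‖z‖ ^ (n + 1) := by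
                  rw [Real.norm_of_nonneg (pow_nonneg (norm_nonneg z) _)]
              _ ≤ C * (d' * t) ^ (n + 1) := by
                  have : ‖z‖ ^ (n+1) ≤ (d' * t) ^ (n+1) :=
                    pow_le_pow_left₀ (norm_nonneg z) hznorm _
                  exact mul_le_mul_of_nonneg_left this hC0.le
              _ = K * t ^ (n + 1) := by rw [hK_def, mul_pow]; ring
          have hcontr : ‖q w‖ / 2 * t ^ n < ‖q w‖ / 2 * t ^ n := by
            calc ‖q w‖ / 2 * t ^ n ≤ ‖q z‖ := hlow
              _ ≤ K * t ^ (n + 1) := hub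
              _ = K * t * t ^ n := by ring
              _ < ‖q w‖ / 2 * t ^ n :=
                  mul_lt_mul_of_pos_right ht_small (pow_pos htpos' n)
          exact lt_irrefl _ hcontr
        intro v
        by_cases hv : v = 0
        · subst hv
          rcases Nat.eq_zero_or_pos n with hn | hn
          · subst hn
            have hone : (fun _ : Fin N => (1:ℝ)) ≠ 0 := by
              intro h
              have := congrFun h ⟨0, hN⟩
              simp at this
            have h1 := hvne (fun _ => (1:ℝ)) hone
            have h2 : (fun _ : Fin 0 => (0 : Fin N → ℝ)) =
                fun _ : Fin 0 => (fun _ : Fin N => (1:ℝ)) := funext fun i => i.elim0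
            rw [h2]
            exact h1
          · exact (p n).map_coord_zero ⟨0, hn⟩ rfl
        · exact hvne v hv
    obtain ⟨r, hball⟩ := hp
    have hev0 : g =ᶠ[nhds x₀] 0 := by
      filter_upwards [EMetric.ball_mem_nhds x₀ hball.r_pos] with x hx
      have hx' : x - x₀ ∈ EMetric.ball (0 : Fin N → ℝ) r := by
        have he : edist (x - x₀) (x₀ - x₀) = edist x x₀ := edist_sub_right x x₀ x₀
        rw [sub_self] at he
        show edist (x - x₀) 0 < r
        rw [he]
        exact hx
      have htend := hball.tendsto_partialSum hx'
      have hzero' : ∀ k, p.partialSum k (x - x₀) = 0 := fun k => by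
        rw [FormalMultilinearSeries.partialSum]
        exact Finset.sum_eq_zero fun m _ => key m _
      have hconst : Tendsto (fun k => p.partialSum k (x - x₀)) atTop (nhds 0) := by
        simpa [hzero'] using (tendsto_const_nhds : Tendsto (fun _ : ℕ => (0:ℝ)) atTop (nhds 0))
      have := tendsto_nhds_unique htend hconst
      simp only [add_sub_cancel] at this
      simpa using this
    exact hg.eqOn_zero_of_preconnected_of_eventuallyEq_zero hΩc.isPreconnected hx₀Ω hev0
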